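/- Let $N_t \ge 1$, $N_r \ge 1$ be integers, let $H$ be an $N_r \times N_t$ complex matrix, and let $\delta_t \ge 0$, $\delta_r > 0$ be real numbers. With $\Phi(\rho) = (\rho \delta_t^2/N_t) H H^H + (\rho \delta_r^2 + 1) I_{N_r}$, the function $\rho \mapsto \log_2 \det\big(I_{N_r} + (\rho/N_t) H H^H \Phi(\rho)^{-1}\big)$ (whose determinant is a positive real number for every $\rho \ge 0$) converges, as $\rho \to \infty$, to the finite limit $\log_2 \det\big(I_{N_r} + H H^H (\delta_t^2 H H^H + N_t \delta_r^2 I_{N_r})^{-1}\big)$. -/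

import Mathlib

open Matrix Filter

lemma det_smul_add_smul_one {n : Type*} [Fintype n] [DecidableEq n]
    {A : Matrix n n ℂ} (hA : A.IsHermitian) (c d : ℂ) :
    (c • A + d • (1 : Matrix n n ℂ)).det
      = ∏ i, (c * hA.eigenvalues i + d) := by
  set U := (hA.eigenvectorUnitary : Matrix n n ℂ) with hUdef
  have hU : U * star U = 1 := (Matrix.mem_unitaryGroup_iff).mp hA.eigenvectorUnitary.2
  have key : c • A + d • (1 : Matrix n n ℂ)
      = U * (c • Matrix.diagonal (RCLike.ofReal ∘ hA.eigenvalues) + d • 1) * star U := by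
    rw [Matrix.mul_add, Matrix.add_mul, Matrix.mul_smul, Matrix.smul_mul,
      Matrix.mul_smul, Matrix.smul_mul, Matrix.mul_one, hU]
    conv_lhs => rw [hA.spectral_theorem, Unitary.conjStarAlgAut_apply]
  rw [key, Matrix.det_mul_right_comm, hU, one_mul]
  have : c • Matrix.diagonal (RCLike.ofReal ∘ hA.eigenvalues) + d • (1 : Matrix n n ℂ)
      = Matrix.diagonal (fun i => c * hA.eigenvalues i + d) := by
    ext i j
    rcases eq_or_ne i j with rfl | h
    · simp [Matrix.one_apply]
    · simp [Matrix.diagonal_apply_ne _ h, Matrix.one_apply_ne h]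
  rw [this, Matrix.det_diagonal]

lemma det_one_add_smul_mul_inv {n : Type*} [Fintype n] [DecidableEq n]
    {A : Matrix n n ℂ} (hA : A.IsHermitian) (hnn : ∀ i, 0 ≤ hA.eigenvalues i)
    (c a b : ℝ) (hc : 0 ≤ c) (ha : 0 ≤ a) (hb : 0 < b) :
    ((1 : Matrix n n ℂ) + ((c : ℝ) : ℂ) • A
        * (((a : ℝ) : ℂ) • A + ((b : ℝ) : ℂ) • (1 : Matrix n n ℂ))⁻¹).det
      = ((∏ i, ((a + c) * hA.eigenvalues i + b) / (a * hA.eigenvalues i + b) : ℝ) : ℂ) := by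
  set Φ : Matrix n n ℂ := ((a : ℝ) : ℂ) • A + ((b : ℝ) : ℂ) • 1 with hΦdef
  have hden : ∀ i, 0 < a * hA.eigenvalues i + b := fun i => by
    have := mul_nonneg ha (hnn i); linarith
  have hnum : ∀ i, 0 < (a + c) * hA.eigenvalues i + b := fun i => by
    have := mul_nonneg (add_nonneg ha hc) (hnn i); linarith
  have hdetΦ : Φ.det = ∏ i, (((a : ℝ) : ℂ) * hA.eigenvalues i + ((b : ℝ) : ℂ)) :=
    det_smul_add_smul_one hA _ _
  have hdetΦ' : Φ.det = ((∏ i, (a * hA.eigenvalues i + b) : ℝ) : ℂ) := by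
    rw [hdetΦ]; push_cast; rfl
  have hdetne : Φ.det ≠ 0 := by
    rw [hdetΦ']
    exact_mod_cast (Finset.prod_pos (fun i _ => hden i)).ne'
  have hinv : Φ * Φ⁻¹ = 1 := Matrix.mul_nonsing_inv _ (isUnit_iff_ne_zero.mpr hdetne)
  have hsplit : (1 : Matrix n n ℂ) + ((c : ℝ) : ℂ) • A * Φ⁻¹
      = (Φ + ((c : ℝ) : ℂ) • A) * Φ⁻¹ := by
    rw [Matrix.add_mul, hinv]
  have hsum : Φ + ((c : ℝ) : ℂ) • A
      = (((a + c : ℝ)) : ℂ) • A + ((b : ℝ) : ℂ) • (1 : Matrix n n ℂ) := by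
    rw [hΦdef]; push_cast; rw [add_smul]; abel
  have hdetsum : (Φ + ((c : ℝ) : ℂ) • A).det
      = ((∏ i, ((a + c) * hA.eigenvalues i + b) : ℝ) : ℂ) := by
    rw [hsum, det_smul_add_smul_one hA]; push_cast; rfl
  rw [hsplit, Matrix.det_mul, hdetsum, Matrix.det_nonsing_inv, Ring.inverse_eq_inv', hdetΦ']
  push_cast
  rw [Finset.prod_div_distrib]
  ring

lemma tendsto_linear_ratio (p q : ℝ) (hq : 0 < q) :
    Tendsto (fun ρ : ℝ => (ρ * p + 1) / (ρ * q + 1)) atTop (nhds (p / q)) := by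
  have h1 : Tendsto (fun ρ : ℝ => (p + ρ⁻¹) / (q + ρ⁻¹)) atTop (nhds (p / q)) := by
    have hnum : Tendsto (fun ρ : ℝ => p + ρ⁻¹) atTop (nhds p) := by
      simpa using (tendsto_const_nhds (x := p)).add tendsto_inv_atTop_zero
    have hden : Tendsto (fun ρ : ℝ => q + ρ⁻¹) atTop (nhds q) := by
      simpa using (tendsto_const_nhds (x := q)).add tendsto_inv_atTop_zero
    exact hnum.div hden hq.ne'
  refine h1.congr' ?_
  filter_upwards [eventually_gt_atTop (0 : ℝ)] with ρ hρ
  have h2 : ρ * q + 1 > 0 := by positivity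
  field_simp

/-- Per-channel-realization high-SNR capacity ceiling: with
`Φ(ρ) = (ρ δt²/N_t) H Hᴴ + (ρ δr² + 1) I`, the determinant
`det(I + (ρ/N_t) H Hᴴ Φ(ρ)⁻¹)` is a positive real number for every `ρ ≥ 0`,
and `log₂` of it converges, as `ρ → ∞`, to the finite limit
`log₂ det(I + H Hᴴ (δt² H Hᴴ + N_t δr² I)⁻¹)`. -/
theorem capacity_per_realization_tendsto_ceiling
    (Nt Nr : ℕ) (hNt : 1 ≤ Nt) (hNr : 1 ≤ Nr)
    (H : Matrix (Fin Nr) (Fin Nt) ℂ)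
    (δt δr : ℝ) (hδt : 0 ≤ δt) (hδr : 0 < δr) :
    (∀ ρ : ℝ, 0 ≤ ρ →
        (((1 : Matrix (Fin Nr) (Fin Nr) ℂ)
            + ((ρ / Nt : ℝ) : ℂ) • (H * Hᴴ)
              * (((ρ * δt ^ 2 / Nt : ℝ) : ℂ) • (H * Hᴴ)
                  + ((ρ * δr ^ 2 + 1 : ℝ) : ℂ)
                      • (1 : Matrix (Fin Nr) (Fin Nr) ℂ))⁻¹).det.im = 0
          ∧ 0 < ((1 : Matrix (Fin Nr) (Fin Nr) ℂ)
            + ((ρ / Nt : ℝ) : ℂ) • (H * Hᴴ)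
              * (((ρ * δt ^ 2 / Nt : ℝ) : ℂ) • (H * Hᴴ)
                  + ((ρ * δr ^ 2 + 1 : ℝ) : ℂ)
                      • (1 : Matrix (Fin Nr) (Fin Nr) ℂ))⁻¹).det.re)) ∧
      Tendsto
        (fun ρ : ℝ =>
          Real.logb 2
            (((1 : Matrix (Fin Nr) (Fin Nr) ℂ)
                + ((ρ / Nt : ℝ) : ℂ) • (H * Hᴴ)
                  * (((ρ * δt ^ 2 / Nt : ℝ) : ℂ) • (H * Hᴴ)
                      + ((ρ * δr ^ 2 + 1 : ℝ) : ℂ)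
                          • (1 : Matrix (Fin Nr) (Fin Nr) ℂ))⁻¹).det.re))
        atTop
        (nhds (Real.logb 2
          (((1 : Matrix (Fin Nr) (Fin Nr) ℂ)
              + (H * Hᴴ)
                * (((δt ^ 2 : ℝ) : ℂ) • (H * Hᴴ)
                    + ((Nt * δr ^ 2 : ℝ) : ℂ)
                        • (1 : Matrix (Fin Nr) (Fin Nr) ℂ))⁻¹).det.re))) := by
  have hNt0 : (0 : ℝ) < Nt := by exact_mod_cast Nat.lt_of_lt_of_le Nat.zero_lt_one hNt
  have hA : (H * Hᴴ).IsHermitian := isHermitian_mul_conjTranspose_self H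
  have hnn : ∀ i, 0 ≤ hA.eigenvalues i := fun i =>
    Matrix.eigenvalues_self_mul_conjTranspose_nonneg H i
  set lam : Fin Nr → ℝ := hA.eigenvalues with hlam
  -- per-ρ determinant value
  have hdet : ∀ ρ : ℝ, 0 ≤ ρ →
      ((1 : Matrix (Fin Nr) (Fin Nr) ℂ)
          + ((ρ / Nt : ℝ) : ℂ) • (H * Hᴴ)
            * (((ρ * δt ^ 2 / Nt : ℝ) : ℂ) • (H * Hᴴ)
                + ((ρ * δr ^ 2 + 1 : ℝ) : ℂ)
                    • (1 : Matrix (Fin Nr) (Fin Nr) ℂ))⁻¹).det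
        = ((∏ i, ((ρ * δt ^ 2 / Nt + ρ / Nt) * lam i + (ρ * δr ^ 2 + 1))
              / ((ρ * δt ^ 2 / Nt) * lam i + (ρ * δr ^ 2 + 1)) : ℝ) : ℂ) := by
    intro ρ hρ
    exact det_one_add_smul_mul_inv hA hnn (ρ / Nt) (ρ * δt ^ 2 / Nt) (ρ * δr ^ 2 + 1)
      (by positivity) (by positivity) (by positivity)
  have hPpos : ∀ ρ : ℝ, 0 ≤ ρ →
      0 < ∏ i, ((ρ * δt ^ 2 / Nt + ρ / Nt) * lam i + (ρ * δr ^ 2 + 1))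
              / ((ρ * δt ^ 2 / Nt) * lam i + (ρ * δr ^ 2 + 1)) := by
    intro ρ hρ
    apply Finset.prod_pos
    intro i _
    have h1 : 0 ≤ lam i := hnn i
    have h2 : 0 < ρ * δr ^ 2 + 1 := by positivity
    apply div_pos
    · have : 0 ≤ (ρ * δt ^ 2 / Nt + ρ / Nt) * lam i := by positivity
      linarith
    · have : 0 ≤ (ρ * δt ^ 2 / Nt) * lam i := by positivity
      linarith
  -- limit determinant value
  have hdenpos : ∀ i, 0 < δt ^ 2 * lam i + Nt * δr ^ 2 := fun i => by
    have h1 := mul_nonneg (sq_nonneg δt) (hnn i)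
    have h2 : (0:ℝ) < Nt * δr ^ 2 := by positivity
    linarith
  have hL : ((1 : Matrix (Fin Nr) (Fin Nr) ℂ)
        + (H * Hᴴ) * (((δt ^ 2 : ℝ) : ℂ) • (H * Hᴴ)
            + ((Nt * δr ^ 2 : ℝ) : ℂ) • (1 : Matrix (Fin Nr) (Fin Nr) ℂ))⁻¹).det
      = ((∏ i, ((δt ^ 2 + 1) * lam i + Nt * δr ^ 2)
            / (δt ^ 2 * lam i + Nt * δr ^ 2) : ℝ) : ℂ) := by
    have := det_one_add_smul_mul_inv hA hnn 1 (δt ^ 2) (Nt * δr ^ 2)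
      zero_le_one (sq_nonneg δt) (by positivity)
    simpa using this
  set L : ℝ := ∏ i, ((δt ^ 2 + 1) * lam i + Nt * δr ^ 2) / (δt ^ 2 * lam i + Nt * δr ^ 2)
    with hLdef
  have hLpos : 0 < L := by
    apply Finset.prod_pos
    intro i _
    refine div_pos ?_ (hdenpos i)
    have h1 := mul_nonneg (by positivity : (0:ℝ) ≤ δt ^ 2 + 1) (hnn i)
    have h2 : (0:ℝ) < Nt * δr ^ 2 := by positivity
    linarith
  refine ⟨fun ρ hρ => by rw [hdet ρ hρ]; exact ⟨Complex.ofReal_im _, by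
    rw [Complex.ofReal_re]; exact hPpos ρ hρ⟩, ?_⟩
  -- convergence of the product
  have hprod : Tendsto (fun ρ : ℝ =>
      ∏ i, ((ρ * δt ^ 2 / Nt + ρ / Nt) * lam i + (ρ * δr ^ 2 + 1))
            / ((ρ * δt ^ 2 / Nt) * lam i + (ρ * δr ^ 2 + 1))) atTop (nhds L) := by
    rw [hLdef]
    apply tendsto_finset_prod
    intro i _
    set p : ℝ := (δt ^ 2 / Nt + 1 / Nt) * lam i + δr ^ 2 with hp
    set q : ℝ := (δt ^ 2 / Nt) * lam i + δr ^ 2 with hq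
    have hqpos : 0 < q := by
      have := mul_nonneg (by positivity : (0:ℝ) ≤ δt ^ 2 / Nt) (hnn i)
      rw [hq]; nlinarith
    have heq : ((δt ^ 2 + 1) * lam i + Nt * δr ^ 2) / (δt ^ 2 * lam i + Nt * δr ^ 2)
        = p / q := by
      rw [div_eq_div_iff (hdenpos i).ne' hqpos.ne', hp, hq]
      field_simp
    rw [heq]
    refine (tendsto_linear_ratio p q hqpos).congr (fun ρ => ?_)
    rw [hp, hq]
    congr 1 <;> field_simp <;> ring
  have hlogb : Tendsto (fun ρ : ℝ =>
      Real.logb 2 (∏ i, ((ρ * δt ^ 2 / Nt + ρ / Nt) * lam i + (ρ * δr ^ 2 + 1))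
            / ((ρ * δt ^ 2 / Nt) * lam i + (ρ * δr ^ 2 + 1)))) atTop
      (nhds (Real.logb 2 L)) :=
    (Real.continuousAt_logb hLpos.ne').tendsto.comp hprod
  have hre : (((1 : Matrix (Fin Nr) (Fin Nr) ℂ)
        + (H * Hᴴ) * (((δt ^ 2 : ℝ) : ℂ) • (H * Hᴴ)
            + ((Nt * δr ^ 2 : ℝ) : ℂ) • (1 : Matrix (Fin Nr) (Fin Nr) ℂ))⁻¹).det).re = L := by
    rw [hL, Complex.ofReal_re]
  rw [hre]
  refine hlogb.congr' ?_
  filter_upwards [eventually_ge_atTop (0 : ℝ)] with ρ hρ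
  rw [hdet ρ hρ, Complex.ofReal_re]
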